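/- Let n ≥ 3 and let i and j be positive integers. If F_{n,u} is the largest summand in the n-decomposition of i and F_{n,v} is the largest summand in the n-decomposition of j (i.e., u and v are the largest indices appearing in the respective decompositions), then u > v implies i > j. -/

import Mathlib

/-- Let `n ≥ 3` and let `i, j` be positive integers with `n`-decompositions
encoded by the lists `Li`, `Lj`.  If `u` is the largest index appearing in the
decomposition of `i` and `v` the largest index appearing in the decomposition
of `j`, then `u > v` implies `i > j`. -/
theorem larger_top_summand_larger_number (n : ℕ) (hn : 3 ≤ n) (F : ℕ → ℕ)
    (hF1 : ∀ i, 1 ≤ i → i ≤ n → F i = 1)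
    (hFrec : ∀ m, n ≤ m → F (m + 1) = F m + F (m + 1 - n))
    (i j : ℕ) (hi : 1 ≤ i) (hj : 1 ≤ j)
    (Li Lj : List ℕ) (u v : ℕ)
    (hLin : ∀ c ∈ Li, n ≤ c) (hLigap : Li.Chain' (fun a b => a + n ≤ b))
    (hLisum : (Li.map F).sum = i)
    (hLjn : ∀ c ∈ Lj, n ≤ c) (hLjgap : Lj.Chain' (fun a b => a + n ≤ b))
    (hLjsum : (Lj.map F).sum = j)
    (hu_mem : u ∈ Li) (hu_max : ∀ c ∈ Li, c ≤ u)
    (hv_mem : v ∈ Lj) (hv_max : ∀ c ∈ Lj, c ≤ v)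
    (huv : v < u) : j < i := by
  have hstep : ∀ m, 1 ≤ m → F m ≤ F (m + 1) := by
    intro m hm
    rcases le_or_gt n m with h | h
    · rw [hFrec m h]; exact Nat.le_add_right _ _
    · rw [hF1 m hm (le_of_lt h), hF1 (m + 1) (by omega) (by omega)]
  have hmono : ∀ a b, 1 ≤ a → a ≤ b → F a ≤ F b := by
    intro a b ha hab
    induction b with
    | zero => omega
    | succ b ih =>
      rcases Nat.lt_or_ge a (b + 1) with h | h
      · exact le_trans (ih (by omega)) (hstep b (by omega))
      · have : a = b + 1 := by omega
        subst this; exact le_rfl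
  have hpos : ∀ m, 1 ≤ m → 1 ≤ F m := by
    intro m hm
    have := hmono 1 m le_rfl hm
    rwa [hF1 1 le_rfl (by omega)] at this
  have key : ∀ w, ∀ L : List ℕ, (∀ c ∈ L, n ≤ c) →
      L.Chain' (fun a b => a + n ≤ b) → (∀ c ∈ L, c ≤ w) →
      (L.map F).sum < F (w + 1) := by
    intro w
    induction w using Nat.strong_induction_on with
    | _ w ih =>
      intro L hLn hLc hLw
      rcases L.eq_nil_or_concat with rfl | ⟨L', ℓ, rfl⟩
      · simpa [Nat.one_le_iff_ne_zero, Nat.pos_iff_ne_zero] using hpos (w + 1) (by omega)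
      · simp only [List.concat_eq_append] at hLn hLc hLw ⊢
        haveI : IsTrans ℕ (fun a b => a + n ≤ b) :=
          ⟨fun a b c hab hbc => by simp at *; omega⟩
        have hpair : (L' ++ [ℓ]).Pairwise (fun a b => a + n ≤ b) :=
          List.isChain_iff_pairwise.mp hLc
        rw [List.pairwise_append] at hpair
        have hlast : ∀ a ∈ L', a + n ≤ ℓ := by
          intro a ha
          exact hpair.2.2 a ha ℓ (List.mem_singleton_self ℓ)
        have hℓn : n ≤ ℓ := hLn ℓ (by simp)
        have hℓw : ℓ ≤ w := hLw ℓ (by simp)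
        have hsum : ((L' ++ [ℓ]).map F).sum = (L'.map F).sum + F ℓ := by
          simp
        have hIH : (L'.map F).sum < F (ℓ - n + 1) := by
          refine ih (ℓ - n) (by omega) L' (fun c hc => hLn c (by simp [hc]))
            (List.isChain_iff_pairwise.mpr hpair.1) (fun c hc => by have := hlast c hc; omega)
        have hrec : F (ℓ + 1) = F ℓ + F (ℓ - n + 1) := by
          have := hFrec ℓ hℓn
          have h2 : ℓ + 1 - n = ℓ - n + 1 := by omega
          rw [h2] at this; exact this
        have : ((L' ++ [ℓ]).map F).sum < F (ℓ + 1) := by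
          rw [hsum, hrec]; omega
        exact lt_of_lt_of_le this (hmono (ℓ + 1) (w + 1) (by omega) (by omega))
  have hvn : n ≤ v := hLjn v hv_mem
  have h1 : j < F (v + 1) := hLjsum ▸ key v Lj hLjn hLjgap hv_max
  have h2 : F (v + 1) ≤ F u := hmono (v + 1) u (by omega) (by omega)
  have h3 : F u ≤ i := by
    rw [← hLisum]
    exact List.single_le_sum (fun x _ => Nat.zero_le x) (F u)
      (List.mem_map_of_mem hu_mem)
  omega
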